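/- There exists a constant c ≥ 1 such that the following holds: for every γ ∈ (0,1], every L₀ > 0, every D > 0, every real K ≥ 1, every function u : ℤ³ → ℂ with u(0) = 0, with Σ_{α ≠ 0} |α|·|u(α)|² ≤ L₀, and with |u(α)| ≤ D/|α|^{2−γ} for all α with |α| ≥ K, and every k ∈ ℤ³ with |k| ≥ 2K, one has Σ_{α ∈ ℤ³, α ≠ 0, 0 < |k−α| ≤ (1/2)·|k|^{1−γ}} |α|·|u(α)|·|u(k−α)| ≤ c·√L₀·D. -/

import Mathlib

/-- The Euclidean norm of a lattice point in `ℤ³`. -/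
noncomputable def znorm (a : Fin 3 → ℤ) : ℝ := Real.sqrt (∑ i, ((a i : ℝ)) ^ 2)

/- Auxiliary lemmas -/

lemma znorm_nonneg (a : Fin 3 → ℤ) : 0 ≤ znorm a := Real.sqrt_nonneg _

lemma abs_le_znorm (a : Fin 3 → ℤ) (i : Fin 3) : |(a i : ℝ)| ≤ znorm a := by
  rw [znorm, ← Real.sqrt_sq_eq_abs]
  exact Real.sqrt_le_sqrt (Finset.single_le_sum (f := fun j => ((a j : ℝ)) ^ 2)
    (fun j _ => sq_nonneg _) (Finset.mem_univ i))

noncomputable def box (m : ℕ) : Finset (Fin 3 → ℤ) := Fintype.piFinset fun _ => Finset.Icc (-(m : ℤ)) m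

lemma card_box (m : ℕ) : (box m).card = (2 * m + 1) ^ 3 := by
  rw [box, Fintype.card_piFinset]
  simp [Int.card_Icc]
  rw [show ((m : ℤ) + 1 + m).toNat = 2 * m + 1 by omega]

def supn (b : Fin 3 → ℤ) : ℕ := Finset.univ.sup fun i => (b i).natAbs

lemma mem_box_iff {m : ℕ} {b : Fin 3 → ℤ} : b ∈ box m ↔ supn b ≤ m := by
  rw [box, Fintype.mem_piFinset, supn]
  simp only [Finset.sup_le_iff, Finset.mem_univ, forall_true_left, Finset.mem_Icc]
  constructor
  · intro h i; have := h i; omega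
  · intro h i; have := h i; omega

lemma box_mono {m n : ℕ} (h : m ≤ n) : box m ⊆ box n := by
  intro b hb; rw [mem_box_iff] at *; omega

lemma supn_le_znorm (b : Fin 3 → ℤ) : (supn b : ℝ) ≤ znorm b := by
  obtain ⟨i, -, hi⟩ := Finset.exists_mem_eq_sup (Finset.univ : Finset (Fin 3))
    ⟨0, Finset.mem_univ 0⟩ (fun i => (b i).natAbs)
  rw [supn, hi]
  calc ((b i).natAbs : ℝ) = |(b i : ℝ)| := by rw [Nat.cast_natAbs]; push_cast; ring
    _ ≤ znorm b := abs_le_znorm b i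

lemma card_shell {n : ℕ} (hn : 1 ≤ n) (s : Finset (Fin 3 → ℤ))
    (hs : ∀ b ∈ s, supn b = n) : (s.card : ℝ) ≤ 26 * (n : ℝ) ^ 2 := by
  have hsub : s ⊆ box n \ box (n - 1) := by
    intro b hb
    rw [Finset.mem_sdiff, mem_box_iff, mem_box_iff]
    have := hs b hb; omega
  have h1 : s.card ≤ (box n).card - (box (n - 1)).card := by
    calc s.card ≤ (box n \ box (n - 1)).card := Finset.card_le_card hsub
      _ = (box n).card - (box (n - 1)).card := Finset.card_sdiff_of_subset (box_mono (by omega))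
  have h2 : (box (n-1)).card ≤ (box n).card := Finset.card_le_card (box_mono (by omega))
  have h3 : (s.card : ℝ) ≤ ((box n).card : ℝ) - ((box (n-1)).card : ℝ) := by
    rw [← Nat.cast_sub h2]; exact_mod_cast h1
  rw [card_box, card_box] at h3
  have hd : ((n - 1 : ℕ) : ℝ) = (n : ℝ) - 1 := by
    have := Nat.cast_sub (R := ℝ) hn; simpa using this
  push_cast at h3
  rw [hd] at h3
  have hn' : (1:ℝ) ≤ n := by exact_mod_cast hn
  nlinarith [h3]

lemma one_le_znorm' {a : Fin 3 → ℤ} (ha : a ≠ 0) : 1 ≤ znorm a := by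
  obtain ⟨i, hi⟩ : ∃ i, a i ≠ 0 := by
    by_contra h; push_neg at h; exact ha (funext h)
  calc (1 : ℝ) ≤ |(a i : ℝ)| := by
        rw [← Int.cast_abs]; exact_mod_cast Int.one_le_abs hi
    _ ≤ znorm a := abs_le_znorm a i

lemma latsum (M : ℕ) :
    ∑ b ∈ (box M).filter (fun b => b ≠ 0), 1 / znorm b ≤ 26 * (M : ℝ) ^ 2 := by
  have hmap : ∀ b ∈ (box M).filter (fun b => b ≠ 0), supn b ∈ Finset.Icc 1 M := by
    intro b hb
    rw [Finset.mem_filter, mem_box_iff] at hb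
    rw [Finset.mem_Icc]
    refine ⟨?_, hb.1⟩
    by_contra h
    push_neg at h
    interval_cases h' : supn b
    apply hb.2
    funext i
    have : (b i).natAbs ≤ 0 := h' ▸ Finset.le_sup (f := fun i => (b i).natAbs) (Finset.mem_univ i)
    simpa using by omega
  rw [← Finset.sum_fiberwise_of_maps_to hmap (fun b => 1 / znorm b)]
  have inner : ∀ n ∈ Finset.Icc 1 M,
      ∑ b ∈ ((box M).filter (fun b => b ≠ 0)).filter (fun b => supn b = n), 1 / znorm b
        ≤ 26 * (M : ℝ) := by
    intro n hn
    rw [Finset.mem_Icc] at hn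
    have hnR : (1 : ℝ) ≤ n := by exact_mod_cast hn.1
    have hcard : ((((box M).filter (fun b => b ≠ 0)).filter (fun b => supn b = n)).card : ℝ)
        ≤ 26 * (n : ℝ) ^ 2 := by
      apply card_shell hn.1
      intro b hb
      exact (Finset.mem_filter.mp hb).2
    have hterm : ∀ b ∈ ((box M).filter (fun b => b ≠ 0)).filter (fun b => supn b = n),
        1 / znorm b ≤ 1 / (n : ℝ) := by
      intro b hb
      have hsb : (n : ℝ) ≤ znorm b := by
        have := supn_le_znorm b
        rw [(Finset.mem_filter.mp hb).2] at this
        exact this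
      exact one_div_le_one_div_of_le (by linarith) hsb
    calc ∑ b ∈ ((box M).filter (fun b => b ≠ 0)).filter (fun b => supn b = n), 1 / znorm b
        ≤ (((box M).filter (fun b => b ≠ 0)).filter (fun b => supn b = n)).card • (1 / (n : ℝ)) :=
          Finset.sum_le_card_nsmul _ _ _ hterm
      _ = (((box M).filter (fun b => b ≠ 0)).filter (fun b => supn b = n)).card * (1 / (n : ℝ)) := by
          rw [nsmul_eq_mul]
      _ ≤ 26 * (n : ℝ) ^ 2 * (1 / (n : ℝ)) := by
          apply mul_le_mul_of_nonneg_right hcard; positivity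
      _ = 26 * (n : ℝ) := by field_simp
      _ ≤ 26 * (M : ℝ) := by
          have : (n : ℝ) ≤ M := by exact_mod_cast hn.2
          linarith
  calc ∑ n ∈ Finset.Icc 1 M, ∑ b ∈ ((box M).filter (fun b => b ≠ 0)).filter
          (fun b => supn b = n), 1 / znorm b
      ≤ (Finset.Icc 1 M).card • (26 * (M : ℝ)) := Finset.sum_le_card_nsmul _ _ _ inner
    _ ≤ M * (26 * (M : ℝ)) := by
        rw [nsmul_eq_mul, Nat.card_Icc]
        have : ((M + 1 - 1 : ℕ) : ℝ) = M := by push_cast; ring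
        rw [this]
    _ = 26 * (M : ℝ) ^ 2 := by ring

lemma znorm_zero : znorm 0 = 0 := by simp [znorm]

lemma znorm_pos' {a : Fin 3 → ℤ} (ha : a ≠ 0) : 0 < znorm a :=
  lt_of_lt_of_le one_pos (one_le_znorm' ha)

noncomputable def zvec (a : Fin 3 → ℤ) : EuclideanSpace ℝ (Fin 3) :=
  (EuclideanSpace.equiv (Fin 3) ℝ).symm (fun i => (a i : ℝ))

lemma znorm_eq_norm (a : Fin 3 → ℤ) : znorm a = ‖zvec a‖ := by
  rw [EuclideanSpace.norm_eq]
  simp [znorm, zvec, Real.norm_eq_abs, sq_abs]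

lemma zvec_add (x y : Fin 3 → ℤ) : zvec (x + y) = zvec x + zvec y := by
  ext i; simp [zvec]

lemma znorm_triangle (x y : Fin 3 → ℤ) : znorm (x + y) ≤ znorm x + znorm y := by
  rw [znorm_eq_norm, znorm_eq_norm, znorm_eq_norm, zvec_add]
  exact norm_add_le _ _


/-- There is a constant `c ≥ 1` such that: for every `γ ∈ (0,1]`, `L₀ > 0`, `D > 0`, `K ≥ 1`,
every `u : ℤ³ → ℂ` with `u 0 = 0`, `∑_{α ≠ 0} |α||u α|² ≤ L₀`, and
`|u α| ≤ D/|α|^{2−γ}` for `|α| ≥ K`, and every `k` with `|k| ≥ 2K`,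
`∑_{α ≠ 0, 0 < |k−α| ≤ (1/2)|k|^{1−γ}} |α||u α||u (k−α)| ≤ c·√L₀·D`. -/
theorem bootstrap_piece_II_bound :
    ∃ c : ℝ, 1 ≤ c ∧
      ∀ (γ : ℝ), 0 < γ → γ ≤ 1 →
      ∀ (L₀ D K : ℝ), 0 < L₀ → 0 < D → 1 ≤ K →
      ∀ u : (Fin 3 → ℤ) → ℂ, u 0 = 0 →
        Summable (fun α : {a : Fin 3 → ℤ // a ≠ 0} => znorm α.1 * ‖u α.1‖ ^ 2) →
        (∑' α : {a : Fin 3 → ℤ // a ≠ 0}, znorm α.1 * ‖u α.1‖ ^ 2) ≤ L₀ →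
        (∀ α : Fin 3 → ℤ, K ≤ znorm α → ‖u α‖ ≤ D / znorm α ^ ((2 : ℝ) - γ)) →
        ∀ k : Fin 3 → ℤ, 2 * K ≤ znorm k →
          (∑' α : {a : Fin 3 → ℤ //
              a ≠ 0 ∧ 0 < znorm (k - a) ∧
                znorm (k - a) ≤ (1 / 2) * znorm k ^ ((1 : ℝ) - γ)},
            znorm α.1 * ‖u α.1‖ * ‖u (k - α.1)‖)
            ≤ c * Real.sqrt L₀ * D := by
  refine ⟨6, by norm_num, ?_⟩
  intro γ hγ0 hγ1 L₀ D K hL₀ hD hK u hu0 hsum hL hptw k hk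
  have hnk2 : (2 : ℝ) ≤ znorm k := le_trans (by linarith) hk
  have hnkpos : (0 : ℝ) < znorm k := by linarith
  have hsL : (0:ℝ) ≤ Real.sqrt L₀ := Real.sqrt_nonneg _
  set R : ℝ := (1 / 2) * znorm k ^ ((1 : ℝ) - γ) with hR
  have hrpos : (0 : ℝ) < znorm k ^ ((1 : ℝ) - γ) := Real.rpow_pos_of_pos hnkpos _
  have hR0 : 0 < R := by rw [hR]; linarith
  have hRle : R ≤ znorm k / 2 := by
    have h1 : znorm k ^ ((1 : ℝ) - γ) ≤ znorm k ^ (1 : ℝ) :=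
      Real.rpow_le_rpow_of_exponent_le (by linarith) (by linarith)
    rw [Real.rpow_one] at h1
    rw [hR]; linarith
  set M := ⌊R⌋₊ with hM
  have hMR : (M : ℝ) ≤ R := Nat.floor_le hR0.le
  apply tsum_le_of_sum_le' (by positivity)
  intro s
  set A : ℝ := 2 * D * znorm k ^ (γ - 1) with hA
  have hA0 : 0 ≤ A := by positivity
  classical
  set t : Finset (Fin 3 → ℤ) := s.image (fun x => k - x.1) with ht
  have hinj : ∀ x ∈ s, ∀ y ∈ s, k - x.1 = k - y.1 → x = y := by
    intro x _ y _ hxy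
    apply Subtype.ext
    have h2 := congrArg (fun z => k - z) hxy
    simpa [sub_sub_cancel] using h2
  have himg : ∑ x ∈ s, znorm x.1 * ‖u x.1‖ * ‖u (k - x.1)‖
      = ∑ b ∈ t, znorm (k - b) * ‖u (k - b)‖ * ‖u b‖ := by
    rw [ht, Finset.sum_image hinj]
    apply Finset.sum_congr rfl
    intro x _
    simp only [sub_sub_cancel]
  -- properties of elements of t
  have htmem : ∀ b ∈ t, b ≠ 0 ∧ znorm b ≤ R ∧ k - b ≠ 0 ∧ K ≤ znorm (k - b) := by
    intro b hb
    rw [ht, Finset.mem_image] at hb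
    obtain ⟨x, _, hxb⟩ := hb
    obtain ⟨hx0, hxpos, hxle⟩ := x.2
    have hb1 : b = k - x.1 := hxb.symm
    have hkb : k - b = x.1 := by rw [hb1, sub_sub_cancel]
    have hbpos : 0 < znorm b := by rw [hb1]; exact hxpos
    have hbne : b ≠ 0 := by
      intro h; rw [h, znorm_zero] at hbpos; exact lt_irrefl _ hbpos
    have hbR : znorm b ≤ R := by rw [hb1]; exact hxle
    refine ⟨hbne, hbR, by rw [hkb]; exact hx0, ?_⟩
    -- triangle: znorm k ≤ znorm (k - b) + znorm b
    have htri : znorm k ≤ znorm (k - b) + znorm b := by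
      have : (k - b) + b = k := by abel
      calc znorm k = znorm ((k - b) + b) := by rw [this]
        _ ≤ znorm (k - b) + znorm b := znorm_triangle _ _
    have : znorm k / 2 ≤ znorm (k - b) := by
      have := hRle; linarith
    linarith
  -- pointwise bound
  have hpt : ∀ b ∈ t, znorm (k - b) * ‖u (k - b)‖ * ‖u b‖ ≤ A * ‖u b‖ := by
    intro b hb
    obtain ⟨hbne, hbR, hkbne, hKkb⟩ := htmem b hb
    have hkbpos : (0:ℝ) < znorm (k - b) := lt_of_lt_of_le (by linarith) hKkb
    have hhalf : znorm k / 2 ≤ znorm (k - b) := by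
      have htri : znorm k ≤ znorm (k - b) + znorm b := by
        have h2 : (k - b) + b = k := by abel
        calc znorm k = znorm ((k - b) + b) := by rw [h2]
          _ ≤ znorm (k - b) + znorm b := znorm_triangle _ _
      linarith
    have hu1 : ‖u (k - b)‖ ≤ D / znorm (k - b) ^ ((2:ℝ) - γ) := hptw _ hKkb
    have step1 : znorm (k - b) * ‖u (k - b)‖ ≤ D * znorm (k - b) ^ (γ - 1) := by
      have hz : znorm (k - b) ^ (γ - 1)
          = znorm (k - b) / znorm (k - b) ^ ((2:ℝ) - γ) := by
        rw [eq_div_iff (ne_of_gt (Real.rpow_pos_of_pos hkbpos _)),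
          ← Real.rpow_add hkbpos]
        rw [show (γ - 1 + (2 - γ) : ℝ) = 1 by ring, Real.rpow_one]
      have h2 : znorm (k - b) * (D / znorm (k - b) ^ ((2:ℝ) - γ))
          = D * znorm (k - b) ^ (γ - 1) := by
        rw [hz]; ring
      calc znorm (k - b) * ‖u (k - b)‖
          ≤ znorm (k - b) * (D / znorm (k - b) ^ ((2:ℝ) - γ)) := by
            apply mul_le_mul_of_nonneg_left hu1 hkbpos.le
        _ = D * znorm (k - b) ^ (γ - 1) := h2
    have step2 : znorm (k - b) ^ (γ - 1) ≤ (znorm k / 2) ^ (γ - 1) :=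
      Real.rpow_le_rpow_of_nonpos (by linarith) hhalf (by linarith)
    have step3 : (znorm k / 2) ^ (γ - 1) ≤ 2 * znorm k ^ (γ - 1) := by
      have hsplit : (znorm k / 2) ^ (γ - 1)
          = znorm k ^ (γ - 1) * ((1:ℝ)/2) ^ (γ - 1) := by
        rw [show znorm k / 2 = znorm k * (1/2) by ring]
        exact Real.mul_rpow hnkpos.le (by norm_num)
      have hhalfpow : ((1:ℝ)/2) ^ (γ - 1) = (2:ℝ) ^ ((1:ℝ) - γ) := by
        rw [show ((1:ℝ)/2) = (2:ℝ)⁻¹ by norm_num, Real.inv_rpow (by norm_num),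
          ← Real.rpow_neg (by norm_num), show (-(γ - 1) : ℝ) = 1 - γ by ring]
      have h2le : (2:ℝ) ^ ((1:ℝ) - γ) ≤ 2 := by
        calc (2:ℝ) ^ ((1:ℝ) - γ) ≤ (2:ℝ) ^ (1:ℝ) :=
              Real.rpow_le_rpow_of_exponent_le (by norm_num) (by linarith)
          _ = 2 := Real.rpow_one 2
      rw [hsplit, hhalfpow]
      have : (0:ℝ) ≤ znorm k ^ (γ - 1) := (Real.rpow_pos_of_pos hnkpos _).le
      nlinarith
    have hub : znorm (k - b) * ‖u (k - b)‖ ≤ A := by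
      rw [hA]
      calc znorm (k - b) * ‖u (k - b)‖ ≤ D * znorm (k - b) ^ (γ - 1) := step1
        _ ≤ D * (znorm k / 2) ^ (γ - 1) := by
            apply mul_le_mul_of_nonneg_left step2 hD.le
        _ ≤ D * (2 * znorm k ^ (γ - 1)) := by
            apply mul_le_mul_of_nonneg_left step3 hD.le
        _ = 2 * D * znorm k ^ (γ - 1) := by ring
    exact mul_le_mul_of_nonneg_right hub (norm_nonneg _)
  -- Cauchy-Schwarz
  have hCS : ∑ b ∈ t, ‖u b‖
      ≤ Real.sqrt (∑ b ∈ t, znorm b * ‖u b‖ ^ 2) * Real.sqrt (∑ b ∈ t, 1 / znorm b) := by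
    have h1 : ∀ b ∈ t, ‖u b‖
        = (Real.sqrt (znorm b) * ‖u b‖) * (Real.sqrt (znorm b))⁻¹ := by
      intro b hb
      have hbpos : 0 < znorm b := znorm_pos' (htmem b hb).1
      have hs : Real.sqrt (znorm b) ≠ 0 := by positivity
      field_simp
    have h2 : ∀ b ∈ t, (Real.sqrt (znorm b) * ‖u b‖) ^ 2 = znorm b * ‖u b‖ ^ 2 := by
      intro b hb
      rw [mul_pow, Real.sq_sqrt (znorm_nonneg b)]
    have h3 : ∀ b ∈ t, ((Real.sqrt (znorm b))⁻¹) ^ 2 = 1 / znorm b := by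
      intro b hb
      rw [inv_pow, Real.sq_sqrt (znorm_nonneg b), one_div]
    calc ∑ b ∈ t, ‖u b‖
        = ∑ b ∈ t, (Real.sqrt (znorm b) * ‖u b‖) * (Real.sqrt (znorm b))⁻¹ :=
          Finset.sum_congr rfl h1
      _ ≤ Real.sqrt (∑ b ∈ t, (Real.sqrt (znorm b) * ‖u b‖) ^ 2)
          * Real.sqrt (∑ b ∈ t, ((Real.sqrt (znorm b))⁻¹) ^ 2) :=
          Real.sum_mul_le_sqrt_mul_sqrt _ _ _
      _ = Real.sqrt (∑ b ∈ t, znorm b * ‖u b‖ ^ 2) * Real.sqrt (∑ b ∈ t, 1 / znorm b) := by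
          rw [Finset.sum_congr rfl h2, Finset.sum_congr rfl h3]
  -- P ≤ L₀
  have hP : ∑ b ∈ t, znorm b * ‖u b‖ ^ 2 ≤ L₀ := by
    have hfil : t.filter (fun a => a ≠ 0) = t := by
      apply Finset.filter_true_of_mem
      intro b hb; exact (htmem b hb).1
    have hle := Summable.sum_le_tsum (t.subtype (fun a => a ≠ 0))
      (fun b _ => mul_nonneg (znorm_nonneg _) (sq_nonneg _)) hsum
    calc ∑ b ∈ t, znorm b * ‖u b‖ ^ 2
        = ∑ b ∈ t.filter (fun a => a ≠ 0), znorm b * ‖u b‖ ^ 2 := by rw [hfil]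
      _ = ∑ x ∈ t.subtype (fun a => a ≠ 0), znorm x.1 * ‖u x.1‖ ^ 2 :=
          (Finset.sum_subtype_eq_sum_filter _).symm
      _ ≤ ∑' α : {a : Fin 3 → ℤ // a ≠ 0}, znorm α.1 * ‖u α.1‖ ^ 2 := hle
      _ ≤ L₀ := hL
  -- Q ≤ 26 R²
  have hQ : ∑ b ∈ t, 1 / znorm b ≤ 26 * R ^ 2 := by
    have hsub : t ⊆ (box M).filter (fun b => b ≠ 0) := by
      intro b hb
      rw [Finset.mem_filter, mem_box_iff]
      refine ⟨?_, (htmem b hb).1⟩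
      rw [supn]
      apply Finset.sup_le
      intro i _
      apply Nat.le_floor
      calc ((b i).natAbs : ℝ) = |(b i : ℝ)| := by rw [Nat.cast_natAbs]; push_cast; ring
        _ ≤ znorm b := abs_le_znorm b i
        _ ≤ R := (htmem b hb).2.1
    calc ∑ b ∈ t, 1 / znorm b ≤ ∑ b ∈ (box M).filter (fun b => b ≠ 0), 1 / znorm b := by
          apply Finset.sum_le_sum_of_subset_of_nonneg hsub
          intro b hb _
          have : 0 < znorm b := znorm_pos' (Finset.mem_filter.mp hb).2
          positivity
      _ ≤ 26 * (M : ℝ) ^ 2 := latsum M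
      _ ≤ 26 * R ^ 2 := by nlinarith [Nat.cast_nonneg (α := ℝ) M]
  -- combine
  have hsum_norms : ∑ b ∈ t, ‖u b‖ ≤ Real.sqrt L₀ * (Real.sqrt 26 * R) := by
    have hPQ : Real.sqrt (∑ b ∈ t, znorm b * ‖u b‖ ^ 2) * Real.sqrt (∑ b ∈ t, 1 / znorm b)
        ≤ Real.sqrt L₀ * Real.sqrt (26 * R ^ 2) := by
      apply mul_le_mul (Real.sqrt_le_sqrt hP) (Real.sqrt_le_sqrt hQ)
        (Real.sqrt_nonneg _) hsL
    have h26 : Real.sqrt (26 * R ^ 2) = Real.sqrt 26 * R := by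
      rw [Real.sqrt_mul (by norm_num), Real.sqrt_sq hR0.le]
    calc ∑ b ∈ t, ‖u b‖
        ≤ Real.sqrt (∑ b ∈ t, znorm b * ‖u b‖ ^ 2) * Real.sqrt (∑ b ∈ t, 1 / znorm b) := hCS
      _ ≤ Real.sqrt L₀ * Real.sqrt (26 * R ^ 2) := hPQ
      _ = Real.sqrt L₀ * (Real.sqrt 26 * R) := by rw [h26]
  have hfinal : A * (Real.sqrt L₀ * (Real.sqrt 26 * R)) ≤ 6 * Real.sqrt L₀ * D := by
    have hpow : znorm k ^ (γ - 1) * znorm k ^ ((1:ℝ) - γ) = 1 := by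
      rw [← Real.rpow_add hnkpos]
      norm_num
    have hAR : A * R = D * (znorm k ^ (γ - 1) * znorm k ^ ((1:ℝ) - γ)) := by
      rw [hA, hR]; ring
    have h26' : Real.sqrt 26 ≤ 6 := by
      nlinarith [Real.sq_sqrt (by norm_num : (0:ℝ) ≤ 26), Real.sqrt_nonneg 26]
    have hARD : A * R = D := by rw [hAR, hpow, mul_one]
    calc A * (Real.sqrt L₀ * (Real.sqrt 26 * R))
        = (A * R) * Real.sqrt L₀ * Real.sqrt 26 := by ring
      _ = D * Real.sqrt L₀ * Real.sqrt 26 := by rw [hARD]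
      _ ≤ D * Real.sqrt L₀ * 6 := by
          apply mul_le_mul_of_nonneg_left h26' (by positivity)
      _ = 6 * Real.sqrt L₀ * D := by ring
  calc ∑ x ∈ s, znorm x.1 * ‖u x.1‖ * ‖u (k - x.1)‖
      = ∑ b ∈ t, znorm (k - b) * ‖u (k - b)‖ * ‖u b‖ := himg
    _ ≤ ∑ b ∈ t, A * ‖u b‖ := Finset.sum_le_sum hpt
    _ = A * ∑ b ∈ t, ‖u b‖ := by rw [Finset.mul_sum]
    _ ≤ A * (Real.sqrt L₀ * (Real.sqrt 26 * R)) :=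
        mul_le_mul_of_nonneg_left hsum_norms hA0
    _ ≤ 6 * Real.sqrt L₀ * D := hfinal
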